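/- Fix j ∈ N, x̄_j ∈ [0,1] and (ȳ₀, ȳ) ∈ Y, and let S* := {t ∈ N\{j} : ȳ_t ≥ ȳ_j}. Then (x̄_j, ȳ₀, ȳ) satisfies Under(j,S) for every S ⊆ N\{j} if and only if it satisfies Under(j,S*). Equivalently, S* minimizes the function S ↦ U(S∪{j})·ȳ_j + Σ_{t∈N\(S∪{j})} u_t·ȳ_t over all subsets S ⊆ N\{j}. -/

import Mathlib

/-- Separation for the `Under` inequalities: the choice-probability-ordered set
`S* = {t ≠ j : ȳ_t ≥ ȳ_j}` gives the most violated inequality, and it minimizes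
`S ↦ U(S∪{j})·ȳ_j + Σ_{t∉S∪{j}} u_t·ȳ_t`. -/
theorem stmt10 (n : ℕ) (hn : 1 ≤ n) (u0 : ℝ) (hu0 : 0 < u0)
    (u : Fin n → ℝ) (hu : ∀ t, 0 ≤ u t) (j : Fin n)
    (xj y0 : ℝ) (y : Fin n → ℝ)
    (hx0 : 0 ≤ xj) (hx1 : xj ≤ 1)
    (hnorm : u0 * y0 + ∑ t, u t * y t = 1)
    (hbd : ∀ t, 0 ≤ y t ∧ y t ≤ y0)
    (Under : Finset (Fin n) → Prop)
    (hUnder : ∀ S : Finset (Fin n),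
      Under S ↔
        (u0 + ∑ t ∈ insert j S, u t)⁻¹ * xj -
            ∑ t ∈ Finset.univ \ insert j S, u t * (u0 + ∑ s ∈ insert j S, u s)⁻¹ * y t
          ≤ y j) :
    ((∀ S : Finset (Fin n), j ∉ S → Under S) ↔
        Under (Finset.univ.filter fun t => t ≠ j ∧ y j ≤ y t)) ∧
    (∀ S : Finset (Fin n), j ∉ S →
      (u0 + ∑ t ∈ insert j (Finset.univ.filter fun t => t ≠ j ∧ y j ≤ y t), u t) * y j +
          ∑ t ∈ Finset.univ \ insert j (Finset.univ.filter fun t => t ≠ j ∧ y j ≤ y t),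
            u t * y t
        ≤ (u0 + ∑ t ∈ insert j S, u t) * y j +
            ∑ t ∈ Finset.univ \ insert j S, u t * y t) := by
  classical
  set Sstar : Finset (Fin n) := Finset.univ.filter fun t => t ≠ j ∧ y j ≤ y t with hSstar
  set F : Finset (Fin n) → ℝ := fun S =>
    (u0 + ∑ t ∈ insert j S, u t) * y j + ∑ t ∈ Finset.univ \ insert j S, u t * y t with hF
  have hjS : j ∉ Sstar := by simp [hSstar]
  -- rewrite F as a pointwise sum
  have key : ∀ S : Finset (Fin n),
      F S = u0 * y j + ∑ t, (if t ∈ insert j S then u t * y j else u t * y t) := by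
    intro S
    have h1 : ∑ t, (if t ∈ insert j S then u t * y j else u t * y t)
        = ∑ t ∈ insert j S, u t * y j + ∑ t ∈ Finset.univ \ insert j S, u t * y t := by
      rw [Finset.sum_ite]
      congr 1
      · apply Finset.sum_congr _ (fun _ _ => rfl)
        ext t; simp
      · apply Finset.sum_congr _ (fun _ _ => rfl)
        ext t; simp [Finset.mem_sdiff]
    show (u0 + ∑ t ∈ insert j S, u t) * y j + _ = _
    rw [h1, add_mul, Finset.sum_mul, add_assoc]
  -- minimality of Sstar
  have hmin : ∀ S : Finset (Fin n), F Sstar ≤ F S := by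
    intro S
    rw [key, key]
    apply (add_le_add_iff_left _).mpr
    apply Finset.sum_le_sum
    intro t _
    by_cases htj : t = j
    · simp [htj]
    · have hmem : t ∈ insert j Sstar ↔ y j ≤ y t := by
        simp [hSstar, htj]
      by_cases hyt : y j ≤ y t
      · rw [if_pos (hmem.mpr hyt)]
        split
        · exact le_refl _
        · exact mul_le_mul_of_nonneg_left hyt (hu t)
      · rw [if_neg (fun h => hyt (hmem.mp h))]
        split
        · exact mul_le_mul_of_nonneg_left (le_of_not_ge hyt) (hu t)
        · exact le_refl _
  -- Under S ↔ xj ≤ F S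
  have hiff : ∀ S : Finset (Fin n), Under S ↔ xj ≤ F S := by
    intro S
    set U : ℝ := u0 + ∑ t ∈ insert j S, u t with hUdef
    have hUpos : 0 < U :=
      add_pos_of_pos_of_nonneg hu0 (Finset.sum_nonneg fun t _ => hu t)
    have hsum : ∑ t ∈ Finset.univ \ insert j S, u t * U⁻¹ * y t
        = U⁻¹ * ∑ t ∈ Finset.univ \ insert j S, u t * y t := by
      rw [Finset.mul_sum]; exact Finset.sum_congr rfl fun t _ => by ring
    rw [hUnder S]
    show U⁻¹ * xj - ∑ t ∈ Finset.univ \ insert j S, u t * U⁻¹ * y t ≤ y j ↔ _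
    rw [hsum, ← mul_sub, inv_mul_le_iff₀ hUpos, sub_le_iff_le_add]
  refine ⟨⟨fun h => h Sstar hjS, fun h S hS => ?_⟩, fun S hS => hmin S⟩
  rw [hiff] at h ⊢
  exact h.trans (hmin S)
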